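/- arXiv:2511.22147 — 2 statements merged into one kernel-verified Lean document; each statement's English description precedes it below -/
import Mathlib

section
/- Let X and Y be finite nonempty types and let p be a probability mass function on X × Y (p(x,y) ≥ 0 for all (x,y) and ∑_{x,y} p(x,y) = 1), with marginals p_X(x) = ∑_y p(x,y) and p_Y(y) = ∑_x p(x,y). Define the Shannon entropy H(X) = −∑_x p_X(x) log p_X(x) and the mutual information I(X;Y) = ∑_{x,y} p(x,y) log( p(x,y) / (p_X(x) p_Y(y)) ), with the convention 0 log 0 = 0. Let q : X × Y → ℝ be any family of conditional probability mass functions, i.e. q(x|y) ≥ 0 and ∑_x q(x|y) = 1 for every y, and assume q(x|y) > 0 whenever p(x,y) > 0. Then I(X;Y) ≥ H(X) + ∑_{x,y} p(x,y) log q(x|y). -/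
open scoped BigOperators

/-- Barber–Agakov variational lower bound on mutual information (Theorem 1):
for a pmf `p` on `X × Y` with marginals `pX`, `pY`, entropy `H(X)` and mutual
information `I(X;Y)` given by explicit finite sums (natural log, `0 log 0 = 0`),
and any family of conditional pmfs `q(x|y)` positive wherever `p(x,y) > 0`,
we have `I(X;Y) ≥ H(X) + ∑ p(x,y) log q(x|y)`. -/
theorem barber_agakov_bound {X Y : Type*} [Fintype X] [Fintype Y]
    [Nonempty X] [Nonempty Y]
    (p : X → Y → ℝ)
    (hp_nonneg : ∀ x y, 0 ≤ p x y)
    (hp_sum : ∑ x, ∑ y, p x y = 1)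
    (q : X → Y → ℝ)
    (hq_nonneg : ∀ x y, 0 ≤ q x y)
    (hq_sum : ∀ y, ∑ x, q x y = 1)
    (hq_pos : ∀ x y, 0 < p x y → 0 < q x y) :
    (∑ x, ∑ y, p x y *
        Real.log (p x y / ((∑ y', p x y') * (∑ x', p x' y)))) ≥
      (- ∑ x, (∑ y, p x y) * Real.log (∑ y, p x y)) +
        ∑ x, ∑ y, p x y * Real.log (q x y) := by
  set pX : X → ℝ := fun x => ∑ y, p x y with hpX
  set pY : Y → ℝ := fun y => ∑ x, p x y with hpY
  have hpY_nonneg : ∀ y, 0 ≤ pY y := fun y =>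
    Finset.sum_nonneg fun x _ => hp_nonneg x y
  -- termwise Gibbs inequality
  have key : ∀ x y, p x y * Real.log (p x y / (pX x * pY y))
      + p x y * Real.log (pX x) - p x y * Real.log (q x y)
      ≥ p x y - pY y * q x y := by
    intro x y
    rcases eq_or_lt_of_le (hp_nonneg x y) with h0 | hpos
    · rw [← h0]
      simp only [zero_mul, add_zero, sub_zero, zero_sub, zero_add]
      have : 0 ≤ pY y * q x y := mul_nonneg (hpY_nonneg y) (hq_nonneg x y)
      linarith
    · have hxp : 0 < pX x :=
        lt_of_lt_of_le hpos (Finset.single_le_sum (fun y' _ => hp_nonneg x y')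
          (Finset.mem_univ y))
      have hyp : 0 < pY y :=
        lt_of_lt_of_le hpos (Finset.single_le_sum (fun x' _ => hp_nonneg x' y)
          (Finset.mem_univ x))
      have hq : 0 < q x y := hq_pos x y hpos
      have hlog : Real.log (p x y / (pX x * pY y))
          = Real.log (p x y) - Real.log (pX x) - Real.log (pY y) := by
        rw [Real.log_div hpos.ne' (by positivity), Real.log_mul hxp.ne' hyp.ne']
        ring
      have hle : Real.log (pY y * q x y / p x y) ≤ pY y * q x y / p x y - 1 :=
        Real.log_le_sub_one_of_pos (by positivity)
      have hlog2 : Real.log (pY y * q x y / p x y)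
          = Real.log (pY y) + Real.log (q x y) - Real.log (p x y) := by
        rw [Real.log_div (by positivity) hpos.ne', Real.log_mul hyp.ne' hq.ne']
      have hmul : p x y * Real.log (pY y * q x y / p x y)
          ≤ pY y * q x y - p x y := by
        have h1 := mul_le_mul_of_nonneg_left hle hpos.le
        have h2 : p x y * (pY y * q x y / p x y - 1) = pY y * q x y - p x y := by
          field_simp
        linarith [h1, h2.ge, h2.le]
      rw [hlog]
      rw [hlog2] at hmul
      nlinarith [hmul]
  -- the sum of the right-hand sides vanishes
  have hsum0 : ∑ x, ∑ y, (p x y - pY y * q x y) = 0 := by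
    have h1 : ∑ x, ∑ y, pY y * q x y = 1 := by
      rw [Finset.sum_comm]
      have : ∀ y, ∑ x, pY y * q x y = pY y := by
        intro y
        rw [← Finset.mul_sum, hq_sum y, mul_one]
      rw [Finset.sum_congr rfl fun y _ => this y]
      rw [hpY]
      rw [Finset.sum_comm]
      exact hp_sum
    simp only [Finset.sum_sub_distrib]
    rw [hp_sum, h1]
    ring
  have main : ∑ x, ∑ y, (p x y * Real.log (p x y / (pX x * pY y))
      + p x y * Real.log (pX x) - p x y * Real.log (q x y)) ≥ 0 := by
    rw [← hsum0]
    apply Finset.sum_le_sum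
    intro x _
    apply Finset.sum_le_sum
    intro y _
    exact key x y
  have hsplit : ∑ x, ∑ y, (p x y * Real.log (p x y / (pX x * pY y))
      + p x y * Real.log (pX x) - p x y * Real.log (q x y))
      = (∑ x, ∑ y, p x y * Real.log (p x y / (pX x * pY y)))
        + (∑ x, pX x * Real.log (pX x))
        - ∑ x, ∑ y, p x y * Real.log (q x y) := by
    simp only [Finset.sum_sub_distrib, Finset.sum_add_distrib]
    congr 1
    congr 1
    refine Finset.sum_congr rfl fun x _ => ?_
    rw [← Finset.sum_mul]
  rw [hsplit] at main
  linarith [main]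
end

section
/- Let X and Y be finite nonempty types and let p be a probability mass function on X × Y with marginals p_X and p_Y, and let p(x|y) = p(x,y)/p_Y(y) for p_Y(y) > 0 be the conditional pmf. Define H(X) = −∑_x p_X(x) log p_X(x) and I(X;Y) = ∑_{x,y} p(x,y) log( p(x,y) / (p_X(x) p_Y(y)) ), with the convention 0 log 0 = 0. Let q : X × Y → ℝ be a family of conditional probability mass functions (q(x|y) ≥ 0, ∑_x q(x|y) = 1 for every y) with q(x|y) > 0 whenever p(x,y) > 0. Then the gap in the Barber–Agakov bound is exactly an averaged Kullback–Leibler divergence: I(X;Y) − H(X) − ∑_{x,y} p(x,y) log q(x|y) = ∑_y p_Y(y) · ∑_x p(x|y) log( p(x|y) / q(x|y) ), and in particular this gap is nonnegative. -/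
open scoped BigOperators

lemma ba_sub_le_mul_log (a b : ℝ) (ha : 0 ≤ a) (hb : 0 ≤ b) (h : 0 < a → 0 < b) :
    a - b ≤ a * Real.log (a / b) := by
  rcases ha.eq_or_lt with rfl | ha'
  · simp; linarith
  · have hb' := h ha'
    have hlog : Real.log (b / a) ≤ b / a - 1 :=
      Real.log_le_sub_one_of_pos (div_pos hb' ha')
    have : Real.log (a / b) = - Real.log (b / a) := by
      rw [← Real.log_inv]; congr 1; field_simp
    rw [this]
    have h2 : a * (1 - b / a) ≤ a * (- Real.log (b / a)) := by
      apply mul_le_mul_of_nonneg_left _ ha'.le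
      linarith
    calc a - b = a * (1 - b / a) := by field_simp
    _ ≤ _ := h2

/-- The gap in the Barber–Agakov bound is exactly the average (over `p_Y`) of the
Kullback–Leibler divergence between the true conditional `p(·|y)` and the
variational conditional `q(·|y)`; in particular, the gap is nonnegative.
All quantities are explicit finite sums with natural log and `0 log 0 = 0`. -/
theorem barber_agakov_gap {X Y : Type*} [Fintype X] [Fintype Y]
    [Nonempty X] [Nonempty Y]
    (p : X → Y → ℝ)
    (hp_nonneg : ∀ x y, 0 ≤ p x y)
    (hp_sum : ∑ x, ∑ y, p x y = 1)
    (q : X → Y → ℝ)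
    (hq_nonneg : ∀ x y, 0 ≤ q x y)
    (hq_sum : ∀ y, ∑ x, q x y = 1)
    (hq_pos : ∀ x y, 0 < p x y → 0 < q x y) :
    (∑ x, ∑ y, p x y *
          Real.log (p x y / ((∑ y', p x y') * (∑ x', p x' y))))
        - (- ∑ x, (∑ y, p x y) * Real.log (∑ y, p x y))
        - (∑ x, ∑ y, p x y * Real.log (q x y))
      = ∑ y, (∑ x', p x' y) *
          (∑ x, (p x y / (∑ x', p x' y)) *
            Real.log ((p x y / (∑ x', p x' y)) / q x y))
    ∧ 0 ≤ ∑ y, (∑ x', p x' y) *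
          (∑ x, (p x y / (∑ x', p x' y)) *
            Real.log ((p x y / (∑ x', p x' y)) / q x y)) := by
  have hpX_nonneg : ∀ x, 0 ≤ ∑ y', p x y' := fun x =>
    Finset.sum_nonneg fun y _ => hp_nonneg x y
  have hpY_nonneg : ∀ y, 0 ≤ ∑ x', p x' y := fun y =>
    Finset.sum_nonneg fun x _ => hp_nonneg x y
  have hpX_pos : ∀ x y, 0 < p x y → 0 < ∑ y', p x y' := by
    intro x y hp
    exact lt_of_lt_of_le hp (Finset.single_le_sum (fun y' _ => hp_nonneg x y') (Finset.mem_univ y))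
  have hpY_pos : ∀ x y, 0 < p x y → 0 < ∑ x', p x' y := by
    intro x y hp
    exact lt_of_lt_of_le hp (Finset.single_le_sum (fun x' _ => hp_nonneg x' y) (Finset.mem_univ x))
  constructor
  · -- equality
    have hB : ∑ x, (∑ y, p x y) * Real.log (∑ y, p x y)
        = ∑ x, ∑ y, p x y * Real.log (∑ y', p x y') := by
      refine Finset.sum_congr rfl fun x _ => ?_
      rw [Finset.sum_mul]
    rw [hB]
    rw [sub_neg_eq_add, ← Finset.sum_add_distrib]
    rw [← Finset.sum_sub_distrib]
    have hR : ∀ y, (∑ x', p x' y) *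
          (∑ x, (p x y / (∑ x', p x' y)) *
            Real.log ((p x y / (∑ x', p x' y)) / q x y))
        = ∑ x, (∑ x', p x' y) * ((p x y / (∑ x', p x' y)) *
            Real.log ((p x y / (∑ x', p x' y)) / q x y)) := by
      intro y; rw [Finset.mul_sum]
    simp only [hR]
    rw [Finset.sum_comm]
    refine Finset.sum_congr rfl fun x _ => ?_
    rw [← Finset.sum_add_distrib, ← Finset.sum_sub_distrib]
    refine Finset.sum_congr rfl fun y _ => ?_
    rcases (hp_nonneg x y).eq_or_lt with h0 | hpos
    · simp [← h0]
    · have hX := hpX_pos x y hpos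
      have hY := hpY_pos x y hpos
      have hq := hq_pos x y hpos
      have e1 : (∑ x', p x' y) * ((p x y / (∑ x', p x' y)) *
            Real.log ((p x y / (∑ x', p x' y)) / q x y))
          = p x y * Real.log ((p x y / (∑ x', p x' y)) / q x y) := by
        field_simp
      rw [e1]
      rw [Real.log_div (by positivity) hq.ne', Real.log_div hpos.ne' hY.ne',
        Real.log_div hpos.ne' (by positivity), Real.log_mul hX.ne' hY.ne']
      ring
  · -- nonnegativity
    refine Finset.sum_nonneg fun y _ => ?_
    rcases (hpY_nonneg y).eq_or_lt with h0 | hYpos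
    · rw [← h0, zero_mul]
    · refine mul_nonneg hYpos.le ?_
      have key : ∀ x, (p x y / (∑ x', p x' y)) - q x y
          ≤ (p x y / (∑ x', p x' y)) *
            Real.log ((p x y / (∑ x', p x' y)) / q x y) := by
        intro x
        refine ba_sub_le_mul_log _ _ (div_nonneg (hp_nonneg x y) (hpY_nonneg y))
          (hq_nonneg x y) ?_
        intro ha
        have h2 := mul_pos ha hYpos
        rw [div_mul_cancel₀ _ hYpos.ne'] at h2
        exact hq_pos x y h2
      have hsum : ∑ x, ((p x y / (∑ x', p x' y)) - q x y) = 0 := by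
        rw [Finset.sum_sub_distrib, ← Finset.sum_div, div_self hYpos.ne', hq_sum y]
        ring
      calc (0:ℝ) = ∑ x, ((p x y / (∑ x', p x' y)) - q x y) := hsum.symm
      _ ≤ _ := Finset.sum_le_sum fun x _ => key x
end
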